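/- arXiv:1011.5631 — 5 statements merged into one kernel-verified Lean document; each statement's English description precedes it below -/
import Mathlib

section
/- Let s be an even positive integer, d a real number, and λ a real number with λ ∈ (0, π) such that sλ/2 is not an integer multiple of π (equivalently, λ is not of the form 2πj/s for an integer j). Set λ_j = 2πj/s for j = 0, 1, …, s/2, and set d_j = d/2 for j = 0 and j = s/2, and d_j = d for 0 < j < s/2. Then ∏_{j=0}^{s/2} |2 sin((λ − λ_j)/2) · 2 sin((λ + λ_j)/2)|^{−2 d_j} = (2|sin(sλ/2)|)^{−2d}. -/
open Real Finset Polynomial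

lemma exp_sub_exp_aux (v : ℂ) :
    Complex.exp (v*Complex.I) - Complex.exp (-v*Complex.I) = 2 * Complex.sin v * Complex.I := by
  rw [Complex.sin]; field_simp; ring_nf; rw [Complex.I_sq]; ring

lemma abs_exp_sub_exp (a b : ℝ) :
    ‖Complex.exp (a*Complex.I) - Complex.exp (b*Complex.I)‖
      = 2 * |Real.sin ((a-b)/2)| := by
  have key : Complex.exp (a*Complex.I) - Complex.exp (b*Complex.I)
      = Complex.exp ((((a+b)/2:ℝ))*Complex.I) *
        (2 * Complex.sin (((a-b)/2:ℝ)) * Complex.I) := by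
    rw [← exp_sub_exp_aux]
    rw [mul_sub, ← Complex.exp_add, ← Complex.exp_add]
    push_cast
    ring_nf
  rw [key, norm_mul, Complex.norm_exp_ofReal_mul_I, one_mul, norm_mul, norm_mul,
    Complex.norm_I, Complex.norm_two, mul_one, ← Complex.ofReal_sin, Complex.norm_real, Real.norm_eq_abs]

lemma pow_sub_one_eq_prod {n : ℕ} (hn : 0 < n) (z : ℂ) :
    z ^ n - 1 = ∏ j ∈ Finset.range n, (z - Complex.exp (2 * Real.pi * Complex.I * j / n)) := by
  have hprim := Complex.isPrimitiveRoot_exp n hn.ne'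
  have hpoly := Polynomial.X_pow_sub_one_eq_prod hn hprim
  have := congrArg (Polynomial.eval z) hpoly
  simp only [eval_sub, eval_pow, eval_X, eval_one, eval_prod, eval_sub, eval_C] at this
  rw [this]
  refine (Finset.prod_bij (fun j _ => Complex.exp (2 * Real.pi * Complex.I / n) ^ j) ?_ ?_ ?_ ?_).symm
  · intro j hj
    rw [Polynomial.mem_nthRootsFinset hn]
    rw [← pow_mul, mul_comm j n, pow_mul, hprim.pow_eq_one, one_pow]
  · intro i hi j hj h
    exact hprim.pow_inj (Finset.mem_range.1 hi) (Finset.mem_range.1 hj) h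
  · intro ξ hξ
    rw [Polynomial.mem_nthRootsFinset hn] at hξ
    have : NeZero n := ⟨hn.ne'⟩
    obtain ⟨i, hi, hie⟩ := hprim.eq_pow_of_pow_eq_one hξ
    exact ⟨i, Finset.mem_range.2 hi, hie⟩
  · intro j hj
    rw [← Complex.exp_nat_mul]
    ring_nf

lemma prod_two_sin (n : ℕ) (hn : 0 < n) (θ : ℝ) :
    ∏ j ∈ Finset.range n, (2 * |Real.sin ((θ - 2 * Real.pi * j / n) / 2)|)
      = 2 * |Real.sin (n * θ / 2)| := by
  have step : ∀ j ∈ Finset.range n, 2 * |Real.sin ((θ - 2 * Real.pi * j / n) / 2)|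
      = ‖Complex.exp (θ * Complex.I)
          - Complex.exp (2 * Real.pi * Complex.I * j / n)‖ := by
    intro j _
    have : (2 * Real.pi * Complex.I * j / n : ℂ) = ((2 * Real.pi * j / n : ℝ) : ℂ) * Complex.I := by
      push_cast; ring
    rw [this, abs_exp_sub_exp]
  rw [Finset.prod_congr rfl step, ← norm_prod, ← pow_sub_one_eq_prod hn,
    ← Complex.exp_nat_mul]
  have h1 : ((n : ℂ) * (θ * Complex.I)) = ((n * θ : ℝ) : ℂ) * Complex.I := by push_cast; ring
  have h0 : (1 : ℂ) = Complex.exp ((0:ℝ) * Complex.I) := by simp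
  rw [h1, h0, abs_exp_sub_exp]
  norm_num

/-- Product form versus closed form of the single-period seasonal spectral density
factor (Proposition 1(b) of the paper, one seasonal period): for even positive `s`,
`λ ∈ (0, π)` with `sλ/2` not an integer multiple of `π`, and `d_j = d/2` at `j = 0, s/2`,
`d_j = d` otherwise,
`∏_{j=0}^{s/2} |2 sin((λ-λ_j)/2) · 2 sin((λ+λ_j)/2)|^{-2 d_j} = (2|sin(sλ/2)|)^{-2d}`. -/
theorem seasonal_spectral_density_product_form (s : ℕ) (hs : 0 < s) (hse : Even s)
    (d lam : ℝ) (hlam : lam ∈ Set.Ioo 0 Real.pi)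
    (hpole : ∀ k : ℤ, (s : ℝ) * lam / 2 ≠ k * Real.pi) :
    ∏ j ∈ Finset.range (s / 2 + 1),
        |2 * Real.sin ((lam - 2 * Real.pi * j / s) / 2) *
            (2 * Real.sin ((lam + 2 * Real.pi * j / s) / 2))| ^
          (-(2 * (if j = 0 ∨ j = s / 2 then d / 2 else d))) =
      (2 * |Real.sin (s * lam / 2)|) ^ (-(2 * d)) := by
  obtain ⟨m, rfl⟩ := hse
  have hm1 : 1 ≤ m := by omega
  have hmm : ((m:ℝ) + m) ≠ 0 := by
    have : (0:ℝ) < (m:ℝ) + m := by exact_mod_cast (by omega : 0 < m + m)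
    exact this.ne'
  have hhalf : (m + m) / 2 = m := by omega
  simp only [hhalf]
  -- nonvanishing of all sine factors
  have hne : ∀ t : ℤ, Real.sin ((lam + 2 * Real.pi * t / ((m+m:ℕ):ℝ)) / 2) ≠ 0 := by
    intro t h
    rw [Real.sin_eq_zero_iff] at h
    obtain ⟨k, hk⟩ := h
    apply hpole (k * (m+m) - t)
    push_cast
    push_cast at hk
    field_simp at hk ⊢
    nlinarith [hk]
  set F : ℕ → ℝ := fun j => 2 * |Real.sin ((lam - 2 * Real.pi * j / ((m+m:ℕ):ℝ)) / 2)| with hF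
  set G : ℕ → ℝ := fun j => 2 * |Real.sin ((lam + 2 * Real.pi * j / ((m+m:ℕ):ℝ)) / 2)| with hG
  have hFpos : ∀ j : ℕ, 0 < F j := by
    intro j
    have h := hne (-(j:ℤ))
    rw [Int.cast_neg, Int.cast_natCast] at h
    have harg : (lam + 2 * Real.pi * (-(j:ℝ)) / ((m+m:ℕ):ℝ)) / 2
        = (lam - 2 * Real.pi * j / ((m+m:ℕ):ℝ)) / 2 := by push_cast; ring
    rw [harg] at h
    exact mul_pos two_pos (abs_pos.2 h)
  have hGpos : ∀ j : ℕ, 0 < G j := by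
    intro j
    have h := hne (j:ℤ)
    rw [Int.cast_natCast] at h
    exact mul_pos two_pos (abs_pos.2 h)
  have hG0 : G 0 = F 0 := by simp [hF, hG]
  have hGm : G m = F m := by
    have h1 : (lam + 2 * Real.pi * (m:ℝ) / ((m+m:ℕ):ℝ)) / 2
        = (lam - 2 * Real.pi * (m:ℝ) / ((m+m:ℕ):ℝ)) / 2 + Real.pi := by
      push_cast
      field_simp
      ring
    simp only [hF, hG]
    rw [h1, Real.sin_add_pi, abs_neg]
  set K : ℕ → ℝ := fun j => if j = 0 ∨ j = m then F j else F j * G j with hK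
  have hKpos : ∀ j : ℕ, 0 < K j := by
    intro j
    by_cases h : j = 0 ∨ j = m <;> simp [hK, h, hFpos j, mul_pos (hFpos j) (hGpos j)]
  -- termwise rewriting
  have step1 : ∀ j ∈ Finset.range (m+1),
      |2 * Real.sin ((lam - 2 * Real.pi * j / ((m+m:ℕ):ℝ)) / 2) *
          (2 * Real.sin ((lam + 2 * Real.pi * j / ((m+m:ℕ):ℝ)) / 2))| ^
        (-(2 * (if j = 0 ∨ j = m then d / 2 else d)))
      = K j ^ (-(2*d)) := by
    intro j _
    have hbase : |2 * Real.sin ((lam - 2 * Real.pi * j / ((m+m:ℕ):ℝ)) / 2) *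
          (2 * Real.sin ((lam + 2 * Real.pi * j / ((m+m:ℕ):ℝ)) / 2))| = F j * G j := by
      rw [abs_mul, abs_mul, abs_mul, abs_two]
    by_cases h : j = 0 ∨ j = m
    · have hGF : G j = F j := by rcases h with h | h <;> subst h <;> [exact hG0; exact hGm]
      rw [hbase, if_pos h, hGF, hK]
      simp only [if_pos h]
      have he : -(2*(d/2)) = -d := by ring
      rw [he, Real.mul_rpow (hFpos j).le (hFpos j).le, ← Real.rpow_add (hFpos j),
        show -d + -d = -(2*d) by ring]
    · rw [hbase, if_neg h, hK]
      simp only [if_neg h]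
  rw [Finset.prod_congr rfl step1,
    Real.finset_prod_rpow _ _ (fun j _ => (hKpos j).le) (-(2*d))]
  congr 1
  -- main product identity
  have hKsplit : ∀ j ∈ Finset.range (m+1), K j = F j * (if j = 0 ∨ j = m then 1 else G j) := by
    intro j _
    by_cases h : j = 0 ∨ j = m <;> simp [hK, h]
  rw [Finset.prod_congr rfl hKsplit, Finset.prod_mul_distrib]
  have h2 : (∏ j ∈ Finset.range (m+1), (if j = 0 ∨ j = m then 1 else G j))
      = ∏ j ∈ Finset.Ico (m+1) (m+m), F j := by
    rw [Finset.prod_ite, Finset.prod_const_one, one_mul]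
    have hset : (Finset.range (m+1)).filter (fun j => ¬(j = 0 ∨ j = m)) = Finset.Ioo 0 m := by
      ext j; simp; omega
    rw [hset]
    refine Finset.prod_nbij' (fun j => m + m - j) (fun j => m + m - j) ?_ ?_ ?_ ?_ ?_
    · intro a ha; simp at ha ⊢; omega
    · intro a ha; simp at ha ⊢; omega
    · intro a ha; simp at ha ⊢; omega
    · intro a ha; simp at ha ⊢; omega
    · intro j hj
      simp only [Finset.mem_Ioo] at hj
      have hcast : ((m + m - j : ℕ) : ℝ) = (m:ℝ) + m - j := by
        have hle : j ≤ m + m := by omega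
        push_cast [hle]; ring
      simp only [hF, hG]
      rw [hcast]
      have harg : (lam - 2 * Real.pi * ((m:ℝ) + m - j) / ((m+m:ℕ):ℝ)) / 2
          = (lam + 2 * Real.pi * j / ((m+m:ℕ):ℝ)) / 2 - Real.pi := by
        push_cast; field_simp; ring
      rw [harg, Real.sin_sub_pi, abs_neg]
  rw [h2, Finset.range_eq_Ico,
    Finset.prod_Ico_consecutive F (by omega : 0 ≤ m+1) (by omega : m+1 ≤ m+m),
    ← Finset.range_eq_Ico]
  exact prod_two_sin (m+m) (by omega) lam
end

section
/- Let s₁ and s₂ be positive integers and let d₁, d₂ be real numbers satisfying |d₁| < 1/2, |d₂| < 1/2, and |d₁ + d₂| < 1/2. Then the function λ ↦ |2 sin(s₁λ/2)|^{−2d₁} · |2 sin(s₂λ/2)|^{−2d₂} is Lebesgue integrable on the interval [−π, π]. -/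
open Real MeasureTheory Set

private lemma abs_sin_add_int_mul_pi (x : ℝ) (k : ℤ) : |Real.sin (x + k * π)| = |Real.sin x| := by
  rw [Real.sin_add_int_mul_pi, abs_mul]
  have h : |((-1 : ℝ)) ^ k| = 1 := by
    rcases Int.even_or_odd k with h | h
    · rw [h.neg_one_zpow, abs_one]
    · rw [h.neg_one_zpow, abs_neg, abs_one]
  rw [h, one_mul]

/-- Base case: `|sin x| ^ (-a)` is interval integrable on `[0, π]` for `0 < a < 1`. -/
private lemma aux_base {a : ℝ} (ha : 0 < a) (ha1 : a < 1) :
    IntervalIntegrable (fun x => |Real.sin x| ^ (-a)) volume 0 π := by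
  have hmaj : IntervalIntegrable
      (fun x : ℝ => (π / 2) ^ a * (x ^ (-a) + (π - x) ^ (-a))) volume 0 π := by
    have h1 : IntervalIntegrable (fun x : ℝ => x ^ (-a)) volume 0 π :=
      intervalIntegral.intervalIntegrable_rpow' (by linarith)
    have h2 : IntervalIntegrable (fun x : ℝ => (π - x) ^ (-a)) volume 0 π := by
      have := (intervalIntegral.intervalIntegrable_rpow' (a := π) (b := 0)
        (r := -a) (by linarith)).comp_sub_left π
      simpa using this
    exact (h1.add h2).const_mul _
  refine hmaj.mono_fun' ?_ ?_
  · exact (Measurable.pow continuous_sin.abs.measurable measurable_const).aestronglyMeasurable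
  · rw [Set.uIoc_of_le Real.pi_pos.le]
    refine (MeasureTheory.ae_restrict_iff' measurableSet_Ioc).2 (Filter.Eventually.of_forall ?_)
    intro x hx
    obtain ⟨hx0, hxπ⟩ := hx
    have hπ2 : (0 : ℝ) < π / 2 := by positivity
    have hrpos : (0 : ℝ) ≤ (π / 2) ^ a := Real.rpow_nonneg hπ2.le _
    have hkey : ∀ y : ℝ, 0 < y → y ≤ π / 2 →
        Real.sin y ^ (-a) ≤ (π / 2) ^ a * y ^ (-a) := by
      intro y hy0 hy2
      have h1 : 2 / π * y ≤ Real.sin y := Real.mul_le_sin hy0.le hy2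
      have h2 : (0 : ℝ) < 2 / π * y := by positivity
      have h3 : (2 / π : ℝ) ^ (-a) = (π / 2) ^ a := by
        rw [Real.rpow_neg (by positivity), ← Real.inv_rpow (by positivity), inv_div]
      calc Real.sin y ^ (-a) ≤ (2 / π * y) ^ (-a) :=
            Real.rpow_le_rpow_of_nonpos h2 h1 (by linarith)
        _ = (2 / π : ℝ) ^ (-a) * y ^ (-a) := Real.mul_rpow (by positivity) hy0.le
        _ = (π / 2) ^ a * y ^ (-a) := by rw [h3]
    have hnorm : ‖|Real.sin x| ^ (-a)‖ = |Real.sin x| ^ (-a) :=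
      Real.norm_of_nonneg (Real.rpow_nonneg (abs_nonneg _) _)
    show ‖|Real.sin x| ^ (-a)‖ ≤ (π / 2) ^ a * (x ^ (-a) + (π - x) ^ (-a))
    rw [hnorm, abs_of_nonneg (Real.sin_nonneg_of_nonneg_of_le_pi hx0.le hxπ)]
    rcases le_or_gt x (π / 2) with hc | hc
    · calc Real.sin x ^ (-a) ≤ (π / 2) ^ a * x ^ (-a) := hkey x hx0 hc
        _ ≤ (π / 2) ^ a * (x ^ (-a) + (π - x) ^ (-a)) := by
            refine mul_le_mul_of_nonneg_left ?_ hrpos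
            exact le_add_of_nonneg_right (Real.rpow_nonneg (by linarith) _)
    · rcases eq_or_lt_of_le hxπ with heq | hlt
      · rw [heq, Real.sin_pi, Real.zero_rpow (by intro h; exact ha.ne' (by linarith [neg_eq_zero.mp h]))]
        exact mul_nonneg hrpos (add_nonneg (Real.rpow_nonneg Real.pi_pos.le _)
          (Real.rpow_nonneg (by linarith) _))
      · have h1 : Real.sin x = Real.sin (π - x) := (Real.sin_pi_sub x).symm
        rw [h1]
        calc Real.sin (π - x) ^ (-a) ≤ (π / 2) ^ a * (π - x) ^ (-a) :=
              hkey (π - x) (by linarith) (by linarith)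
          _ ≤ (π / 2) ^ a * (x ^ (-a) + (π - x) ^ (-a)) := by
              refine mul_le_mul_of_nonneg_left ?_ hrpos
              exact le_add_of_nonneg_left (Real.rpow_nonneg hx0.le _)

/-- `|sin x| ^ (-a)` is interval integrable on every interval, for `a < 1`. -/
private lemma aux_all {a : ℝ} (ha1 : a < 1) (b c : ℝ) :
    IntervalIntegrable (fun x => |Real.sin x| ^ (-a)) volume b c := by
  rcases le_or_gt a 0 with h | h
  · exact (Continuous.rpow_const continuous_sin.abs
      (fun x => Or.inr (by linarith))).intervalIntegrable _ _
  · have base := aux_base h ha1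
    have hper : ∀ k : ℤ, IntervalIntegrable (fun x => |Real.sin x| ^ (-a)) volume
        ((k : ℝ) * π) ((k : ℝ) * π + π) := by
      intro k
      have h1 := base.comp_add_right (-((k : ℝ) * π))
      have heq : (fun x => |Real.sin (x + -((k : ℝ) * π))| ^ (-a)) =
          fun x => |Real.sin x| ^ (-a) := by
        funext x
        rw [show x + -((k : ℝ) * π) = x + ((-k : ℤ) : ℝ) * π by push_cast; ring,
          abs_sin_add_int_mul_pi]
      rw [heq] at h1
      have he1 : (0 : ℝ) - -((k : ℝ) * π) = (k : ℝ) * π := by ring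
      have he2 : π - -((k : ℝ) * π) = (k : ℝ) * π + π := by ring
      rwa [he1, he2] at h1
    have hpos : ∀ n : ℕ, IntervalIntegrable (fun x => |Real.sin x| ^ (-a)) volume 0
        ((n : ℝ) * π) := by
      intro n
      induction n with
      | zero => simpa using IntervalIntegrable.refl
      | succ n ih =>
        have h2 := hper (n : ℤ)
        rw [show (((n : ℤ) : ℝ)) = (n : ℝ) by push_cast; ring] at h2
        have := ih.trans h2
        rwa [show ((n : ℝ) * π + π) = ((n + 1 : ℕ) : ℝ) * π by push_cast; ring] at this
    have hneg : ∀ n : ℕ, IntervalIntegrable (fun x => |Real.sin x| ^ (-a)) volume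
        (-((n : ℝ) * π)) 0 := by
      intro n
      induction n with
      | zero => simpa using IntervalIntegrable.refl
      | succ n ih =>
        have h2 := hper (-(n + 1) : ℤ)
        rw [show (((-(n + 1) : ℤ) : ℝ)) * π = -(((n + 1 : ℕ) : ℝ) * π) by push_cast; ring,
          show -(((n + 1 : ℕ) : ℝ) * π) + π = -((n : ℝ) * π) by push_cast; ring] at h2
        exact h2.trans ih
    set n : ℕ := ⌈(max |b| |c|) / π⌉₊ with hn
    have hmax : max |b| |c| ≤ (n : ℝ) * π := by
      have h1 : (max |b| |c|) / π ≤ (n : ℝ) := Nat.le_ceil _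
      calc max |b| |c| = (max |b| |c|) / π * π := by field_simp
        _ ≤ (n : ℝ) * π := by
          exact mul_le_mul_of_nonneg_right h1 Real.pi_pos.le
    have hI := (hneg n).trans (hpos n)
    apply hI.mono_set
    have hsym : -((n : ℝ) * π) ≤ (n : ℝ) * π :=
      neg_le_self (by positivity)
    have hb : b ∈ Set.uIcc (-((n : ℝ) * π)) ((n : ℝ) * π) := by
      rw [Set.uIcc_of_le hsym]
      constructor
      · linarith [(abs_le.1 ((le_max_left |b| |c|).trans hmax)).1]
      · linarith [(abs_le.1 ((le_max_left |b| |c|).trans hmax)).2]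
    have hc : c ∈ Set.uIcc (-((n : ℝ) * π)) ((n : ℝ) * π) := by
      rw [Set.uIcc_of_le hsym]
      constructor
      · linarith [(abs_le.1 ((le_max_right |b| |c|).trans hmax)).1]
      · linarith [(abs_le.1 ((le_max_right |b| |c|).trans hmax)).2]
    exact Set.uIcc_subset_uIcc hb hc

/-- The single seasonal factor `|2 sin (s λ / 2)| ^ (-a)` is interval integrable on `[-π, π]`
for `a < 1`. -/
private lemma aux_factor (s : ℕ) {a : ℝ} (ha1 : a < 1) :
    IntervalIntegrable (fun lam : ℝ => |2 * Real.sin ((s : ℝ) * lam / 2)| ^ (-a))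
      volume (-π) π := by
  have hG : ∀ b c : ℝ, IntervalIntegrable (fun x => |2 * Real.sin x| ^ (-a)) volume b c := by
    intro b c
    have heq : (fun x : ℝ => |2 * Real.sin x| ^ (-a)) =
        fun x => (2 : ℝ) ^ (-a) * |Real.sin x| ^ (-a) := by
      funext x
      rw [abs_mul, abs_two, Real.mul_rpow (by norm_num) (abs_nonneg _)]
    rw [heq]
    exact (aux_all ha1 b c).const_mul _
  rcases Nat.eq_zero_or_pos s with hs0 | hs
  · subst hs0
    simp only [Nat.cast_zero, zero_mul, zero_div, Real.sin_zero, mul_zero, abs_zero]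
    rcases eq_or_ne a 0 with ha | ha
    · subst ha
      simpa using intervalIntegrable_const (c := (1 : ℝ)) (μ := volume) (a := -π) (b := π)
    · rw [show (fun _ : ℝ => (0 : ℝ) ^ (-a)) = fun _ : ℝ => (0 : ℝ) by
        funext x; exact Real.zero_rpow (neg_ne_zero.2 ha)]
      exact intervalIntegrable_const
  · have hcne : ((s : ℝ) / 2) ≠ 0 := by positivity
    have h1 := (hG (-π * ((s : ℝ) / 2)) (π * ((s : ℝ) / 2))).comp_mul_left (c := (s : ℝ) / 2)
    rw [mul_div_cancel_right₀ _ hcne, mul_div_cancel_right₀ _ hcne] at h1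
    have heq2 : (fun lam : ℝ => |2 * Real.sin ((s : ℝ) * lam / 2)| ^ (-a)) =
        fun x => |2 * Real.sin ((s : ℝ) / 2 * x)| ^ (-a) := by
      funext x
      rw [show (s : ℝ) * x / 2 = (s : ℝ) / 2 * x by ring]
    rw [heq2]
    exact h1

/-- Integrability of the seasonal long-memory spectral density
(Proposition 1(a) of the paper): if `|d₁| < 1/2`, `|d₂| < 1/2` and `|d₁ + d₂| < 1/2`,
then `λ ↦ |2 sin(s₁λ/2)|^{-2d₁} |2 sin(s₂λ/2)|^{-2d₂}` is integrable on `[-π, π]`. -/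
theorem seasonal_spectral_density_integrable (s₁ s₂ : ℕ) (hs₁ : 0 < s₁) (hs₂ : 0 < s₂)
    (d₁ d₂ : ℝ) (hd₁ : |d₁| < 1 / 2) (hd₂ : |d₂| < 1 / 2) (hsum : |d₁ + d₂| < 1 / 2) :
    IntegrableOn
      (fun lam : ℝ =>
        |2 * Real.sin (s₁ * lam / 2)| ^ (-(2 * d₁)) *
          |2 * Real.sin (s₂ * lam / 2)| ^ (-(2 * d₂)))
      (Set.Icc (-Real.pi) Real.pi) := by
  obtain ⟨hd₁l, hd₁r⟩ := abs_lt.1 hd₁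
  obtain ⟨hd₂l, hd₂r⟩ := abs_lt.1 hd₂
  obtain ⟨hsl, hsr⟩ := abs_lt.1 hsum
  have hlr : max 0 (2 * d₁) < min 1 (1 - 2 * d₂) := by
    apply max_lt
    · exact lt_min (by norm_num) (by linarith)
    · exact lt_min (by linarith) (by linarith)
  set t : ℝ := (max 0 (2 * d₁) + min 1 (1 - 2 * d₂)) / 2 with ht
  have htl : max 0 (2 * d₁) < t := by rw [ht]; linarith
  have htr : t < min 1 (1 - 2 * d₂) := by rw [ht]; linarith
  have ht0 : 0 < t := lt_of_le_of_lt (le_max_left _ _) htl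
  have ht1 : t < 1 := lt_of_lt_of_le htr (min_le_left _ _)
  have hd1t : 2 * d₁ < t := lt_of_le_of_lt (le_max_right _ _) htl
  have hd2t : 2 * d₂ < 1 - t := by
    have := htr.trans_le (min_le_right _ _); linarith
  set p : ℝ := 1 / t with hp
  set q : ℝ := 1 / (1 - t) with hq
  have hp0 : 0 < p := one_div_pos.2 ht0
  have hq0 : 0 < q := one_div_pos.2 (by linarith)
  have hpq : p.HolderConjugate q := by
    rw [Real.holderConjugate_iff]; constructor
    · exact one_lt_one_div ht0 ht1
    · rw [hp, hq, one_div, one_div, inv_inv, inv_inv]; ring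
  have ha1 : 2 * d₁ * p < 1 := by
    calc 2 * d₁ * p < t * p := mul_lt_mul_of_pos_right hd1t hp0
      _ = 1 := by rw [hp, mul_one_div, div_self ht0.ne']
  have ha2 : 2 * d₂ * q < 1 := by
    calc 2 * d₂ * q < (1 - t) * q := mul_lt_mul_of_pos_right hd2t hq0
      _ = 1 := by rw [hq, mul_one_div, div_self (by linarith : (1 : ℝ) - t ≠ 0)]
  have hF1 := aux_factor s₁ ha1
  have hF2 := aux_factor s₂ ha2
  rw [← intervalIntegrable_iff_integrableOn_Icc_of_le (by linarith [Real.pi_pos])]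
  refine ((hF1.div_const p).add (hF2.div_const q)).mono_fun' ?_ ?_
  · have hm : ∀ s : ℕ, ∀ e : ℝ, Measurable fun lam : ℝ =>
        |2 * Real.sin ((s : ℝ) * lam / 2)| ^ e := by
      intro s e
      have hcont : Continuous fun lam : ℝ => |2 * Real.sin ((s : ℝ) * lam / 2)| :=
        (continuous_const.mul (Real.continuous_sin.comp
          ((continuous_const.mul continuous_id).div_const 2))).abs
      exact Measurable.pow hcont.measurable measurable_const
    exact ((hm s₁ (-(2 * d₁))).mul (hm s₂ (-(2 * d₂)))).aestronglyMeasurable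
  · refine Filter.Eventually.of_forall ?_
    intro lam
    set u : ℝ := |2 * Real.sin ((s₁ : ℝ) * lam / 2)| with hu
    set v : ℝ := |2 * Real.sin ((s₂ : ℝ) * lam / 2)| with hv
    have hu0 : 0 ≤ u := abs_nonneg _
    have hv0 : 0 ≤ v := abs_nonneg _
    have hnorm : ‖u ^ (-(2 * d₁)) * v ^ (-(2 * d₂))‖ = u ^ (-(2 * d₁)) * v ^ (-(2 * d₂)) :=
      Real.norm_of_nonneg (mul_nonneg (Real.rpow_nonneg hu0 _) (Real.rpow_nonneg hv0 _))
    show ‖u ^ (-(2 * d₁)) * v ^ (-(2 * d₂))‖ ≤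
      u ^ (-(2 * d₁ * p)) / p + v ^ (-(2 * d₂ * q)) / q
    rw [hnorm]
    calc u ^ (-(2 * d₁)) * v ^ (-(2 * d₂))
        ≤ (u ^ (-(2 * d₁))) ^ p / p + (v ^ (-(2 * d₂))) ^ q / q :=
          Real.young_inequality_of_nonneg (Real.rpow_nonneg hu0 _) (Real.rpow_nonneg hv0 _) hpq
      _ = u ^ (-(2 * d₁ * p)) / p + v ^ (-(2 * d₂ * q)) / q := by
          rw [← Real.rpow_mul hu0, ← Real.rpow_mul hv0, neg_mul, neg_mul]
end

section
/- Let d be a real number with d > −1/2 that is not a nonnegative integer, and define π_k = Γ(k − d) / (Γ(k + 1) Γ(−d)) for positive integers k and π_0 = 1. Then ∑_{k=0}^{∞} π_k² < ∞. -/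
open Real Filter Asymptotics Finset Topology

private lemma frac_sub_ne (d : ℝ) (hd' : ∀ n : ℕ, d ≠ n) (j : ℕ) : (j : ℝ) - d ≠ 0 :=
  sub_ne_zero.mpr fun h => hd' j h.symm

private lemma frac_gamma_prod (d : ℝ) (hd' : ∀ n : ℕ, d ≠ n) (k : ℕ) :
    Real.Gamma ((k : ℝ) - d) = (∏ j ∈ Finset.range k, ((j : ℝ) - d)) * Real.Gamma (-d) := by
  induction k with
  | zero => simp
  | succ k ih =>
    have h1 : ((k + 1 : ℕ) : ℝ) - d = ((k : ℝ) - d) + 1 := by push_cast; ring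
    rw [h1, Real.Gamma_add_one (frac_sub_ne d hd' k), ih, Finset.prod_range_succ]
    ring

/-- Square-summability of the fractional differencing coefficients: for `d > -1/2`
not a nonnegative integer, with `π_0 = 1` and `π_k = Γ(k-d)/(Γ(k+1)Γ(-d))` for `k ≥ 1`,
one has `∑_{k≥0} π_k² < ∞`. -/
theorem fractional_coeff_sq_summable (d : ℝ) (hd : -(1 / 2) < d) (hd' : ∀ n : ℕ, d ≠ n) :
    Summable
      (fun k : ℕ =>
        (if k = 0 then 1 else
          Real.Gamma (k - d) / (Real.Gamma (k + 1) * Real.Gamma (-d))) ^ 2) := by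
  set p : ℕ → ℝ := fun k =>
    if k = 0 then 1 else Real.Gamma (k - d) / (Real.Gamma (k + 1) * Real.Gamma (-d)) with hp
  have hΓ : Real.Gamma (-d) ≠ 0 := by
    refine Real.Gamma_ne_zero fun m => ?_
    intro h
    exact hd' m (by linarith [neg_eq_iff_eq_neg.mp h])
  -- the key limit : p k * k^(d+1) → Γ(-d)⁻¹
  have key : Tendsto (fun k : ℕ => p k * (k : ℝ) ^ (d + 1)) atTop (𝓝 (Real.Gamma (-d))⁻¹) := by
    have h2 : Tendsto (fun k : ℕ => (Real.GammaSeq (-d) k)⁻¹) atTop (𝓝 (Real.Gamma (-d))⁻¹) :=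
      (Real.GammaSeq_tendsto_Gamma (-d)).inv₀ hΓ
    have h3 : Tendsto (fun k : ℕ => (1 : ℝ) - d / k) atTop (𝓝 1) := by
      simpa using tendsto_const_nhds.sub (tendsto_const_div_atTop_nhds_zero_nat d)
    have h4 : Tendsto (fun k : ℕ => ((1 : ℝ) - d / k)⁻¹) atTop (𝓝 1) := by
      simpa using h3.inv₀ one_ne_zero
    have h5 : Tendsto (fun k : ℕ => ((1 : ℝ) - d / k)⁻¹ * (Real.GammaSeq (-d) k)⁻¹)
        atTop (𝓝 (Real.Gamma (-d))⁻¹) := by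
      simpa using h4.mul h2
    refine Tendsto.congr' ?_ h5
    filter_upwards [eventually_ge_atTop 1] with k hk
    have hk0 : (0 : ℝ) < (k : ℝ) := by exact_mod_cast Nat.lt_of_lt_of_le Nat.zero_lt_one hk
    have hkne : k ≠ 0 := Nat.one_le_iff_ne_zero.mp hk
    have hpk : p k = (∏ j ∈ Finset.range k, ((j : ℝ) - d)) / (k.factorial : ℝ) := by
      rw [hp]
      simp only [hkne, if_false]
      rw [frac_gamma_prod d hd' k, Real.Gamma_nat_eq_factorial k]
      field_simp
    -- unfold GammaSeq
    have hGS : Real.GammaSeq (-d) k =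
        (k : ℝ) ^ (-d) * (k.factorial : ℝ) /
          ((∏ j ∈ Finset.range k, ((j : ℝ) - d)) * ((k : ℝ) - d)) := by
      rw [Real.GammaSeq, Finset.prod_range_succ,
        Finset.prod_congr rfl (fun j _ => by ring :
          ∀ j ∈ Finset.range k, -d + (j : ℝ) = (j : ℝ) - d),
        show -d + (k : ℝ) = (k : ℝ) - d from by ring]
    have hP : (∏ j ∈ Finset.range k, ((j : ℝ) - d)) ≠ 0 :=
      Finset.prod_ne_zero_iff.mpr fun j _ => frac_sub_ne d hd' j
    have hkd : (k : ℝ) - d ≠ 0 := frac_sub_ne d hd' k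
    have hfac : (k.factorial : ℝ) ≠ 0 := by exact_mod_cast k.factorial_ne_zero
    have hrpd : (0 : ℝ) < (k : ℝ) ^ d := Real.rpow_pos_of_pos hk0 d
    have hone : (1 : ℝ) - d / k = ((k : ℝ) - d) / k := by field_simp
    have hpow : (k : ℝ) ^ (d + 1) = (k : ℝ) ^ d * k := by
      rw [Real.rpow_add hk0, Real.rpow_one]
    have hinv : (k : ℝ) ^ (-d) = ((k : ℝ) ^ d)⁻¹ := Real.rpow_neg hk0.le d
    rw [hone, hGS, hpk, hpow, hinv]
    field_simp
  -- boundedness of the normalized squares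
  have hsq : Tendsto (fun k : ℕ => (p k * (k : ℝ) ^ (d + 1)) ^ 2) atTop
      (𝓝 ((Real.Gamma (-d))⁻¹ ^ 2)) := key.pow 2
  have hO1 : (fun k : ℕ => (p k * (k : ℝ) ^ (d + 1)) ^ 2) =O[atTop] (fun _ => (1 : ℝ)) :=
    hsq.isBigO_one ℝ
  have hO : (fun k : ℕ => (p k) ^ 2) =O[atTop] (fun k : ℕ => (k : ℝ) ^ (-(2 * (d + 1)))) := by
    have := hO1.mul (isBigO_refl (fun k : ℕ => (k : ℝ) ^ (-(2 * (d + 1)))) atTop)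
    refine (this.congr' ?_ ?_).congr_right (fun k => one_mul _)
    · filter_upwards [eventually_ge_atTop 1] with k hk
      have hk0 : (0 : ℝ) < (k : ℝ) := by exact_mod_cast Nat.lt_of_lt_of_le Nat.zero_lt_one hk
      have : ((k : ℝ) ^ (d + 1)) ^ 2 * (k : ℝ) ^ (-(2 * (d + 1))) = 1 := by
        rw [← Real.rpow_natCast ((k : ℝ) ^ (d + 1)) 2, ← Real.rpow_mul hk0.le,
          ← Real.rpow_add hk0, show (d + 1) * ((2:ℕ):ℝ) + -(2 * (d + 1)) = 0 from by push_cast; ring,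
          Real.rpow_zero]
      calc (p k * (k : ℝ) ^ (d + 1)) ^ 2 * (k : ℝ) ^ (-(2 * (d + 1)))
          = (p k) ^ 2 * (((k : ℝ) ^ (d + 1)) ^ 2 * (k : ℝ) ^ (-(2 * (d + 1)))) := by ring
        _ = (p k) ^ 2 := by rw [this, mul_one]
    · exact Filter.EventuallyEq.rfl
  have hsum : Summable (fun k : ℕ => (k : ℝ) ^ (-(2 * (d + 1)))) :=
    Real.summable_nat_rpow.mpr (by linarith)
  exact summable_of_isBigO_nat' hsum hO
end

section
/- Let α > 0 and let L_m = (1/m) ∑_{i=1}^m log i denote the average of log 1, …, log m. Then (1/m) ∑_{j=1}^m (log j − L_m)·(j/m)^α → α/(α + 1)² as m → ∞. -/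
open Real Filter

open MeasureTheory Set

lemma ceil_pt_mem {m : ℕ} (hm : 1 ≤ m) {x : ℝ} (hx : x ∈ Set.Ioc (0:ℝ) 1) :
    (↑⌈(m:ℝ) * x⌉₊ / (m:ℝ)) ∈ Set.Icc x 1 ∧ (↑⌈(m:ℝ) * x⌉₊ / (m:ℝ)) ≤ x + 1/m := by
  have hm0 : (0:ℝ) < m := by exact_mod_cast hm
  obtain ⟨hx0, hx1⟩ := hx
  have h1 : x ≤ (↑⌈(m:ℝ) * x⌉₊ / (m:ℝ)) := by
    rw [le_div_iff₀ hm0, mul_comm]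
    exact Nat.le_ceil _
  have h2 : (↑⌈(m:ℝ) * x⌉₊ / (m:ℝ)) ≤ 1 := by
    rw [div_le_one hm0]
    exact_mod_cast Nat.ceil_le.mpr (by nlinarith : (m:ℝ) * x ≤ (m:ℕ))
  have h3 : (↑⌈(m:ℝ) * x⌉₊ / (m:ℝ)) ≤ x + 1/m := by
    rw [div_le_iff₀ hm0]
    have h := (Nat.ceil_lt_add_one (by positivity : (0:ℝ) ≤ (m:ℝ) * x)).le
    have h' : (x + 1/m) * m = m * x + 1 := by field_simp
    linarith
  exact ⟨⟨h1, h2⟩, h3⟩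

lemma step_integral (g : ℝ → ℝ) (m : ℕ) (hm : 1 ≤ m) :
    ∫ x in Set.Ioc (0:ℝ) 1, g (↑⌈(m:ℝ) * x⌉₊ / (m:ℝ))
      = (1 / (m:ℝ)) * ∑ j ∈ Finset.Icc 1 m, g ((j:ℝ) / (m:ℝ)) := by
  have hm0 : (0:ℝ) < m := by exact_mod_cast hm
  set h : ℝ → ℝ := fun x => g (↑⌈(m:ℝ) * x⌉₊ / (m:ℝ)) with hh
  set a : ℕ → ℝ := fun k => (k:ℝ) / m with ha
  have hab : ∀ k : ℕ, a k ≤ a (k+1) := fun k => by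
    simp only [ha]
    gcongr ?_ / (m:ℝ)
    push_cast; linarith
  have heq : ∀ k : ℕ, Set.EqOn h (fun _ => g (((k:ℕ)+1:ℝ) / m)) (Set.Ioc (a k) (a (k+1))) := by
    intro k x hxk
    have hc : ⌈(m:ℝ) * x⌉₊ = k + 1 := by
      rw [Nat.ceil_eq_iff (Nat.succ_ne_zero k)]
      have hl : (k:ℝ)/m < x := hxk.1
      have hr : x ≤ ((k:ℝ)+1)/m := by
        have h2 := hxk.2
        simp only [ha] at h2; push_cast at h2; exact h2
      constructor
      · push_cast
        rw [mul_comm]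
        exact (div_lt_iff₀ hm0).1 hl
      · push_cast
        rw [mul_comm]
        exact (le_div_iff₀ hm0).1 hr
    simp only [hh, hc]
    push_cast
    rfl
  have hpiece : ∀ k : ℕ, ∫ x in (a k)..(a (k+1)), h x = g (((k:ℕ)+1:ℝ) / m) * (1/m) := by
    intro k
    rw [intervalIntegral.integral_of_le (hab k),
      MeasureTheory.setIntegral_congr_fun measurableSet_Ioc (heq k),
      MeasureTheory.setIntegral_const, measureReal_def, Real.volume_Ioc, smul_eq_mul]
    have hd : a (k+1) - a k = 1/m := by
      simp only [ha]; push_cast; field_simp; ring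
    rw [hd, ENNReal.toReal_ofReal (by positivity), mul_comm]
  have hint : ∀ k : ℕ, k < m → IntervalIntegrable h volume (a k) (a (k+1)) := by
    intro k _
    rw [intervalIntegrable_iff_integrableOn_Ioc_of_le (hab k)]
    exact (integrableOn_const measure_Ioc_lt_top.ne).congr_fun
      (heq k).symm measurableSet_Ioc
  have hsum := intervalIntegral.sum_integral_adjacent_intervals hint
  have ha0 : a 0 = 0 := by simp [ha]
  have ham : a m = 1 := by simp only [ha]; field_simp
  rw [ha0, ham] at hsum
  rw [← intervalIntegral.integral_of_le zero_le_one, ← hsum]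
  rw [Finset.sum_congr rfl (fun k _ => hpiece k)]
  rw [Finset.mul_sum, ← Finset.Ico_add_one_right_eq_Icc, Finset.sum_Ico_eq_sum_range]
  simp only [Nat.add_sub_cancel, Nat.succ_sub_one]
  apply Finset.sum_congr rfl
  intro k _
  push_cast
  ring

lemma riemann_tendsto (g G : ℝ → ℝ)
    (hcont : ContinuousOn g (Set.Ioc 0 1))
    (hG : IntegrableOn G (Set.Ioc (0:ℝ) 1))
    (hbound : ∀ x ∈ Set.Ioc (0:ℝ) 1, ∀ y ∈ Set.Icc x 1, |g y| ≤ G x) :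
    Tendsto (fun m : ℕ => (1 / (m:ℝ)) * ∑ j ∈ Finset.Icc 1 m, g ((j:ℝ) / (m:ℝ))) atTop
      (nhds (∫ x in Set.Ioc (0:ℝ) 1, g x)) := by
  rw [← tendsto_add_atTop_iff_nat 1]
  have key : Tendsto
      (fun n : ℕ => ∫ x in Set.Ioc (0:ℝ) 1, g (↑⌈((n+1:ℕ):ℝ) * x⌉₊ / ((n+1:ℕ):ℝ)))
      atTop (nhds (∫ x in Set.Ioc (0:ℝ) 1, g x)) := by
    apply MeasureTheory.tendsto_integral_of_dominated_convergence G
    · intro n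
      exact ((Measurable.of_discrete (f := fun k : ℕ => g ((k:ℝ) / ((n+1:ℕ):ℝ)))).comp
        (Nat.measurable_ceil.comp (measurable_const_mul _))).aestronglyMeasurable
    · exact hG
    · intro n
      rw [ae_restrict_iff' measurableSet_Ioc]
      refine Filter.Eventually.of_forall (fun x hx => ?_)
      rw [Real.norm_eq_abs]
      exact hbound x hx _ (ceil_pt_mem (Nat.le_add_left 1 n) hx).1
    · rw [ae_restrict_iff' measurableSet_Ioc]
      refine Filter.Eventually.of_forall (fun x hx => ?_)
      have hmem : ∀ n : ℕ, (↑⌈((n+1:ℕ):ℝ) * x⌉₊ / ((n+1:ℕ):ℝ)) ∈ Set.Ioc (0:ℝ) 1 := by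
        intro n
        have h := (ceil_pt_mem (Nat.le_add_left 1 n) hx).1
        exact ⟨lt_of_lt_of_le hx.1 h.1, h.2⟩
      have hten : Tendsto (fun n : ℕ => (↑⌈((n+1:ℕ):ℝ) * x⌉₊ / ((n+1:ℕ):ℝ))) atTop (nhds x) := by
        have hup : Tendsto (fun n : ℕ => x + 1/((n:ℝ)+1)) atTop (nhds x) := by
          have : Tendsto (fun n : ℕ => x + 1/((n:ℝ)+1)) atTop (nhds (x + 0)) :=
            tendsto_const_nhds.add tendsto_one_div_add_atTop_nhds_zero_nat
          simpa using this
        exact tendsto_of_tendsto_of_tendsto_of_le_of_le tendsto_const_nhds hup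
          (fun n => (ceil_pt_mem (Nat.le_add_left 1 n) hx).1.1)
          (fun n => by
            have h2 := (ceil_pt_mem (Nat.le_add_left 1 n) hx).2
            push_cast at h2 ⊢
            exact h2)
      exact ((hcont x hx).tendsto.comp
        (tendsto_nhdsWithin_of_tendsto_nhds_of_eventually_within _ hten
          (Filter.Eventually.of_forall hmem)))
  refine key.congr (fun n => ?_)
  exact step_integral g (n+1) (Nat.le_add_left 1 n)

lemma contOn_log_mul_rpow {p : ℝ} (hp : 0 < p) :
    ContinuousOn (fun x => Real.log x * x ^ p) (Set.Icc (0:ℝ) 1) := by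
  intro x hx
  rcases eq_or_ne x 0 with rfl | hx0
  · have hval : Real.log 0 * (0:ℝ) ^ p = 0 := by
      rw [Real.zero_rpow hp.ne', mul_zero]
    unfold ContinuousWithinAt
    have hval' : (fun x => Real.log x * x ^ p) 0 = 0 := hval
    rw [hval']
    have hmono : nhdsWithin (0:ℝ) (Set.Icc 0 1) ≤ nhdsWithin 0 (Set.Ici 0) :=
      nhdsWithin_mono _ Set.Icc_subset_Ici_self
    apply Tendsto.mono_left ?_ hmono
    have : Set.Ici (0:ℝ) = insert 0 (Set.Ioi 0) := by
      rw [Set.Ioi_insert]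
    rw [this, nhdsWithin_insert]
    rw [tendsto_sup]
    constructor
    · rw [tendsto_pure_left]
      intro s hs
      simpa [hval] using mem_of_mem_nhds hs
    · exact tendsto_log_mul_rpow_nhdsGT_zero hp
  · exact ((Real.continuousAt_log hx0).mul
      (Real.continuousAt_rpow_const x p (Or.inl hx0))).continuousWithinAt

lemma cont_rpow_const {p : ℝ} (hp : 0 ≤ p) : Continuous (fun x : ℝ => x ^ p) :=
  continuous_iff_continuousAt.2 (fun x => Real.continuousAt_rpow_const x p (Or.inr hp))

lemma integrableOn_neg_log : IntegrableOn (fun x => -Real.log x) (Set.Ioc (0:ℝ) 1) := by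
  apply intervalIntegral.integrableOn_deriv_of_nonneg
    (g := fun x => x - Real.log x * x)
  · apply ContinuousOn.sub continuousOn_id
    have h := contOn_log_mul_rpow (p := 1) one_pos
    simpa [Real.rpow_one] using h
  · intro x hx
    have h1 : HasDerivAt (fun y : ℝ => y - Real.log y * y) (1 - (x⁻¹ * x + Real.log x * 1)) x :=
      (hasDerivAt_id x).sub ((Real.hasDerivAt_log hx.1.ne').mul (hasDerivAt_id x))
    have hx0 : x ≠ 0 := hx.1.ne'
    convert h1 using 1
    field_simp
    ring
  · intro x hx
    simp only [neg_nonneg]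
    exact Real.log_nonpos hx.1.le hx.2.le

lemma intervalIntegrable_log01 : IntervalIntegrable Real.log volume 0 1 := by
  rw [intervalIntegrable_iff_integrableOn_Ioc_of_le zero_le_one]
  refine IntegrableOn.congr_fun integrableOn_neg_log.neg (fun x _ => by simp) measurableSet_Ioc

lemma integral_log01 : ∫ x in Set.Ioc (0:ℝ) 1, Real.log x = -1 := by
  rw [← intervalIntegral.integral_of_le zero_le_one]
  have := intervalIntegral.integral_eq_sub_of_hasDeriv_right_of_le zero_le_one
    (f := fun x => Real.log x * x - x) (f' := Real.log) ?_ ?_ intervalIntegrable_log01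
  · rw [this]; simp
  · apply ContinuousOn.sub ?_ continuousOn_id
    have h := contOn_log_mul_rpow (p := 1) one_pos
    simpa [Real.rpow_one] using h
  · intro x hx
    have h1 : HasDerivAt (fun y : ℝ => Real.log y * y - y) (x⁻¹ * x + Real.log x * 1 - 1) x :=
      ((Real.hasDerivAt_log hx.1.ne').mul (hasDerivAt_id x)).sub (hasDerivAt_id x)
    have hx0 : x ≠ 0 := hx.1.ne'
    have h2 : x⁻¹ * x + Real.log x * 1 - 1 = Real.log x := by field_simp; ring
    rw [h2] at h1
    exact h1.hasDerivWithinAt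

lemma integral_rpow01 {α : ℝ} (hα : 0 < α) :
    ∫ x in Set.Ioc (0:ℝ) 1, x ^ α = 1/(α+1) := by
  rw [← intervalIntegral.integral_of_le zero_le_one]
  rw [integral_rpow (Or.inl (by linarith))]
  rw [Real.one_rpow, Real.zero_rpow (by linarith : α + 1 ≠ 0)]
  ring

lemma integrableOn_log_mul_rpow {α : ℝ} (hα : 0 < α) :
    IntegrableOn (fun x => Real.log x * x ^ α) (Set.Ioc (0:ℝ) 1) := by
  apply Integrable.mono integrableOn_neg_log
  · exact (Real.measurable_log.mul (cont_rpow_const hα.le).measurable).aestronglyMeasurable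
  · rw [ae_restrict_iff' measurableSet_Ioc]
    refine Filter.Eventually.of_forall (fun x hx => ?_)
    rw [Real.norm_eq_abs, Real.norm_eq_abs, abs_neg, abs_mul]
    have h1 : |x ^ α| ≤ 1 := by
      rw [abs_of_nonneg (Real.rpow_nonneg hx.1.le _)]
      exact Real.rpow_le_one hx.1.le hx.2 hα.le
    calc |Real.log x| * |x ^ α| ≤ |Real.log x| * 1 :=
          mul_le_mul_of_nonneg_left h1 (abs_nonneg _)
    _ = |Real.log x| := mul_one _

lemma integral_log_rpow01 {α : ℝ} (hα : 0 < α) :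
    ∫ x in Set.Ioc (0:ℝ) 1, Real.log x * x ^ α = -(1/(α+1)^2) := by
  rw [← intervalIntegral.integral_of_le zero_le_one]
  have hne : α + 1 ≠ 0 := by linarith
  have key := intervalIntegral.integral_eq_sub_of_hasDeriv_right_of_le zero_le_one
    (f := fun x => ((α+1) * (Real.log x * x ^ (α+1)) - x ^ (α+1)) / (α+1)^2)
    (f' := fun x => Real.log x * x ^ α) ?_ ?_ ?_
  · rw [key]
    simp only [Real.log_one, Real.one_rpow, Real.zero_rpow hne, Real.log_zero]
    field_simp
    ring
  · apply ContinuousOn.div_const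
    apply ContinuousOn.sub
    · exact continuousOn_const.mul (contOn_log_mul_rpow (by linarith))
    · exact (cont_rpow_const (by linarith)).continuousOn
  · intro x hx
    have hx0 : x ≠ 0 := hx.1.ne'
    have h1 : HasDerivAt (fun y => Real.log y * y ^ (α+1))
        (x⁻¹ * x^(α+1) + Real.log x * ((α+1) * x^(α+1-1))) x :=
      (Real.hasDerivAt_log hx0).mul (Real.hasDerivAt_rpow_const (Or.inl hx0))
    have h2 : HasDerivAt (fun y => ((α+1) * (Real.log y * y^(α+1)) - y^(α+1)) / (α+1)^2)
        (((α+1) * (x⁻¹ * x^(α+1) + Real.log x * ((α+1) * x^(α+1-1))) - (α+1) * x^(α+1-1)) / (α+1)^2) x :=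
      ((h1.const_mul (α+1)).sub (Real.hasDerivAt_rpow_const (Or.inl hx0))).div_const _
    apply HasDerivAt.hasDerivWithinAt
    refine h2.congr_deriv ?_
    symm
    have e1 : α + 1 - 1 = α := by ring
    rw [e1, Real.rpow_add_one hx0]
    field_simp
    ring
  · rw [intervalIntegrable_iff_integrableOn_Ioc_of_le zero_le_one]
    exact integrableOn_log_mul_rpow hα

/-- For `α > 0` and `L_m = (1/m) ∑_{i=1}^m log i`,
`(1/m) ∑_{j=1}^m (log j - L_m)(j/m)^α → α/(α+1)²` as `m → ∞`. -/
theorem log_centered_power_sum_tendsto (α : ℝ) (hα : 0 < α) :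
    Tendsto
      (fun m : ℕ =>
        (1 / (m : ℝ)) *
          ∑ j ∈ Finset.Icc 1 m,
            (Real.log j - (1 / (m : ℝ)) * ∑ i ∈ Finset.Icc 1 m, Real.log i) *
              ((j : ℝ) / (m : ℝ)) ^ α)
      atTop (nhds (α / (α + 1) ^ 2)) := by
  -- the three Riemann sums
  have habs : ∀ y : ℝ, y ∈ Set.Ioc (0:ℝ) 1 → |Real.log y| = -Real.log y := fun y hy =>
    abs_of_nonpos (Real.log_nonpos hy.1.le hy.2)
  have hlogb : ∀ x ∈ Set.Ioc (0:ℝ) 1, ∀ y ∈ Set.Icc x 1, |Real.log y| ≤ -Real.log x := by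
    intro x hx y hy
    have hy' : y ∈ Set.Ioc (0:ℝ) 1 := ⟨lt_of_lt_of_le hx.1 hy.1, hy.2⟩
    rw [habs y hy']
    have : Real.log x ≤ Real.log y := Real.log_le_log hx.1 hy.1
    linarith
  have hrpow1 : ∀ y ∈ Set.Ioc (0:ℝ) 1, |y ^ α| ≤ (1:ℝ) := by
    intro y hy
    rw [abs_of_nonneg (Real.rpow_nonneg hy.1.le _)]
    exact Real.rpow_le_one hy.1.le hy.2 hα.le
  have hP : Tendsto (fun m : ℕ => (1 / (m:ℝ)) * ∑ j ∈ Finset.Icc 1 m, ((j:ℝ)/(m:ℝ)) ^ α)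
      atTop (nhds (1/(α+1))) := by
    have := riemann_tendsto (fun x => x ^ α) (fun _ => (1:ℝ))
      (fun x hx => (Real.continuousAt_rpow_const x α (Or.inl hx.1.ne')).continuousWithinAt)
      (integrableOn_const measure_Ioc_lt_top.ne)
      (fun x hx y hy => hrpow1 y ⟨lt_of_lt_of_le hx.1 hy.1, hy.2⟩)
    rwa [integral_rpow01 hα] at this
  have hR : Tendsto (fun m : ℕ => (1 / (m:ℝ)) * ∑ j ∈ Finset.Icc 1 m, Real.log ((j:ℝ)/(m:ℝ)))
      atTop (nhds (-1)) := by
    have := riemann_tendsto Real.log (fun x => -Real.log x)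
      (fun x hx => (Real.continuousAt_log hx.1.ne').continuousWithinAt)
      integrableOn_neg_log hlogb
    rwa [integral_log01] at this
  have hQ : Tendsto (fun m : ℕ => (1 / (m:ℝ)) *
      ∑ j ∈ Finset.Icc 1 m, Real.log ((j:ℝ)/(m:ℝ)) * ((j:ℝ)/(m:ℝ)) ^ α)
      atTop (nhds (-(1/(α+1)^2))) := by
    have := riemann_tendsto (fun x => Real.log x * x ^ α) (fun x => -Real.log x)
      (fun x hx => ((Real.continuousAt_log hx.1.ne').mul
        (Real.continuousAt_rpow_const x α (Or.inl hx.1.ne'))).continuousWithinAt)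
      integrableOn_neg_log ?_
    · rwa [integral_log_rpow01 hα] at this
    · intro x hx y hy
      have hy' : y ∈ Set.Ioc (0:ℝ) 1 := ⟨lt_of_lt_of_le hx.1 hy.1, hy.2⟩
      rw [abs_mul]
      calc |Real.log y| * |y ^ α| ≤ |Real.log y| * 1 :=
            mul_le_mul_of_nonneg_left (hrpow1 y hy') (abs_nonneg _)
      _ = |Real.log y| := mul_one _
      _ ≤ -Real.log x := hlogb x hx y hy
  -- combine
  have hS := hQ.sub (hR.mul hP)
  have hval : -(1/(α+1)^2) - (-1) * (1/(α+1)) = α/(α+1)^2 := by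
    have hne : α + 1 ≠ 0 := by linarith
    field_simp
    ring
  rw [hval] at hS
  apply hS.congr'
  filter_upwards [eventually_ge_atTop 1] with m hm
  -- algebraic identity for m ≥ 1
  have hm0 : (m:ℝ) ≠ 0 := by
    have : (0:ℝ) < m := by exact_mod_cast hm
    exact this.ne'
  set c : ℝ := (1 / (m : ℝ)) * ∑ i ∈ Finset.Icc 1 m, Real.log i with hc
  have hlogdiv : ∀ j ∈ Finset.Icc 1 m, Real.log ((j:ℝ)/(m:ℝ)) = Real.log j - Real.log m := by
    intro j hj
    have hj1 : 1 ≤ j := (Finset.mem_Icc.1 hj).1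
    have hj0 : (j:ℝ) ≠ 0 := by positivity
    exact Real.log_div hj0 hm0
  have hRval : (1 / (m:ℝ)) * ∑ i ∈ Finset.Icc 1 m, Real.log ((i:ℝ)/(m:ℝ)) = c - Real.log m := by
    rw [Finset.sum_congr rfl hlogdiv, Finset.sum_sub_distrib, Finset.sum_const, Nat.card_Icc]
    simp only [Nat.add_sub_cancel, nsmul_eq_mul]
    rw [mul_sub, hc]
    congr 1
    field_simp
  rw [hRval]
  have hterm : ∀ j ∈ Finset.Icc 1 m,
      Real.log ((j:ℝ)/(m:ℝ)) * ((j:ℝ)/(m:ℝ)) ^ α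
        = (Real.log j - c) * ((j:ℝ)/(m:ℝ)) ^ α + (c - Real.log m) * ((j:ℝ)/(m:ℝ)) ^ α := by
    intro j hj
    rw [hlogdiv j hj]
    ring
  rw [Finset.sum_congr rfl hterm, Finset.sum_add_distrib, ← Finset.mul_sum]
  ring
end

section
/- Let a ∈ ℝ, δ > 0, c > 0, and let g : ℝ → ℝ be differentiable on [a, a + δ] with |g′(x)| ≤ L for all x ∈ [a, a + δ]. Write L_m = (1/m) ∑_{i=1}^m log i and ḡ = (1/m) ∑_{i=1}^m g(a + ci/n). Then for all positive integers m ≥ 1 and n with cm/n ≤ δ, one has | ∑_{j=1}^m (log j − L_m)(g(a + cj/n) − ḡ) | ≤ L c (m²/n) log m. -/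
open Real

/-- Cross-term bound of order `m² n⁻¹ log m`: if `g` is differentiable on `[a, a+δ]`
with derivative bounded by `L`, `L_m = (1/m)∑_{i=1}^m log i` and
`ḡ = (1/m)∑_{i=1}^m g(a+ci/n)`, then
`|∑_{j=1}^m (log j - L_m)(g(a+cj/n) - ḡ)| ≤ L c (m²/n) log m`. -/
theorem centered_smooth_log_cross_bound (a δ c L : ℝ) (hδ : 0 < δ) (hc : 0 < c)
    (g : ℝ → ℝ) (hg : DifferentiableOn ℝ g (Set.Icc a (a + δ)))
    (hg' : ∀ x ∈ Set.Icc a (a + δ), |derivWithin g (Set.Icc a (a + δ)) x| ≤ L)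
    (m n : ℕ) (hm : 1 ≤ m) (hn : 0 < n) (hmn : c * m / n ≤ δ) :
    |∑ j ∈ Finset.Icc 1 m,
        (Real.log j - (1 / (m : ℝ)) * ∑ i ∈ Finset.Icc 1 m, Real.log i) *
          (g (a + c * j / n) - (1 / (m : ℝ)) * ∑ i ∈ Finset.Icc 1 m, g (a + c * i / n))| ≤
      L * c * ((m : ℝ) ^ 2 / n) * Real.log m := by
  have hm0 : (0:ℝ) < m := by exact_mod_cast hm
  have hm1 : (1:ℝ) ≤ m := by exact_mod_cast hm
  have hn0 : (0:ℝ) < n := by exact_mod_cast hn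
  have hcard : (Finset.Icc 1 m).card = m := by simp
  have hL : 0 ≤ L := le_trans (abs_nonneg _) (hg' a ⟨le_refl a, by linarith⟩)
  have hlogm : 0 ≤ Real.log m := Real.log_nonneg hm1
  -- points belong to the interval
  have hx : ∀ j ∈ Finset.Icc 1 m, a + c * j / n ∈ Set.Icc a (a + δ) := by
    intro j hj
    simp only [Finset.mem_Icc] at hj
    have hjm : (j:ℝ) ≤ m := by exact_mod_cast hj.2
    have hj0 : (0:ℝ) ≤ j := by positivity
    constructor
    · have : 0 ≤ c * j / n := by positivity
      linarith
    · have h1 : c * j / n ≤ c * m / n := by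
        apply div_le_div_of_nonneg_right ?_ hn0.le
        exact mul_le_mul_of_nonneg_left hjm hc.le
      linarith
  -- Lipschitz estimate
  have hlip : ∀ x ∈ Set.Icc a (a + δ), ∀ y ∈ Set.Icc a (a + δ),
      |g x - g y| ≤ L * |x - y| := by
    intro x hxs y hys
    have := (convex_Icc a (a + δ)).norm_image_sub_le_of_norm_derivWithin_le hg
      (fun z hz => hg' z hz) hys hxs
    simpa [Real.norm_eq_abs] using this
  -- bound on the g-deviation
  have hgb : ∀ j ∈ Finset.Icc 1 m,
      |g (a + c * j / n) - (1 / (m : ℝ)) * ∑ i ∈ Finset.Icc 1 m, g (a + c * i / n)|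
        ≤ L * (c * m / n) := by
    intro j hj
    have hrw : g (a + c * j / n) - (1 / (m : ℝ)) * ∑ i ∈ Finset.Icc 1 m, g (a + c * i / n)
        = (1 / (m : ℝ)) * ∑ i ∈ Finset.Icc 1 m, (g (a + c * j / n) - g (a + c * i / n)) := by
      rw [Finset.sum_sub_distrib, Finset.sum_const, hcard]
      field_simp
      ring
    rw [hrw, abs_mul]
    have habs : |(1 : ℝ) / m| = 1 / m := abs_of_pos (by positivity)
    rw [habs]
    have hstep : ∀ i ∈ Finset.Icc 1 m,
        |g (a + c * j / n) - g (a + c * i / n)| ≤ L * (c * m / n) := by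
      intro i hi
      have h1 := hlip _ (hx j hj) _ (hx i hi)
      refine h1.trans ?_
      apply mul_le_mul_of_nonneg_left ?_ hL
      have heq : a + c * j / n - (a + c * i / n) = c * ((j:ℝ) - i) / n := by ring
      rw [heq, abs_div, abs_mul, abs_of_pos hc, abs_of_pos hn0]
      apply div_le_div_of_nonneg_right ?_ hn0.le
      apply mul_le_mul_of_nonneg_left ?_ hc.le
      simp only [Finset.mem_Icc] at hi hj
      have h1' : (1:ℝ) ≤ i := by exact_mod_cast hi.1
      have h2' : (i:ℝ) ≤ m := by exact_mod_cast hi.2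
      have h3' : (1:ℝ) ≤ j := by exact_mod_cast hj.1
      have h4' : (j:ℝ) ≤ m := by exact_mod_cast hj.2
      rw [abs_sub_le_iff]
      constructor <;> linarith
    calc 1 / (m:ℝ) * |∑ i ∈ Finset.Icc 1 m, (g (a + c * j / n) - g (a + c * i / n))|
        ≤ 1 / (m:ℝ) * ∑ i ∈ Finset.Icc 1 m, |g (a + c * j / n) - g (a + c * i / n)| := by
          apply mul_le_mul_of_nonneg_left (Finset.abs_sum_le_sum_abs _ _) (by positivity)
      _ ≤ 1 / (m:ℝ) * ∑ i ∈ Finset.Icc 1 m, (L * (c * m / n)) := by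
          apply mul_le_mul_of_nonneg_left (Finset.sum_le_sum hstep) (by positivity)
      _ = L * (c * m / n) := by
          rw [Finset.sum_const, hcard, nsmul_eq_mul]
          field_simp
  -- bound on the log-deviation
  have hlb : ∀ j ∈ Finset.Icc 1 m,
      |Real.log j - (1 / (m : ℝ)) * ∑ i ∈ Finset.Icc 1 m, Real.log i| ≤ Real.log m := by
    intro j hj
    simp only [Finset.mem_Icc] at hj
    have hlj0 : 0 ≤ Real.log j := Real.log_nonneg (by exact_mod_cast hj.1)
    have hljm : Real.log j ≤ Real.log m :=
      Real.log_le_log (by exact_mod_cast hj.1) (by exact_mod_cast hj.2)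
    have hLm0 : 0 ≤ (1 / (m : ℝ)) * ∑ i ∈ Finset.Icc 1 m, Real.log i := by
      apply mul_nonneg (by positivity)
      apply Finset.sum_nonneg
      intro i hi
      simp only [Finset.mem_Icc] at hi
      exact Real.log_nonneg (by exact_mod_cast hi.1)
    have hLmm : (1 / (m : ℝ)) * ∑ i ∈ Finset.Icc 1 m, Real.log i ≤ Real.log m := by
      have hsum : ∑ i ∈ Finset.Icc 1 m, Real.log i ≤ ∑ i ∈ Finset.Icc 1 m, Real.log m := by
        apply Finset.sum_le_sum
        intro i hi
        simp only [Finset.mem_Icc] at hi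
        exact Real.log_le_log (by exact_mod_cast hi.1) (by exact_mod_cast hi.2)
      rw [Finset.sum_const, hcard, nsmul_eq_mul] at hsum
      calc (1 / (m : ℝ)) * ∑ i ∈ Finset.Icc 1 m, Real.log i
          ≤ (1 / (m : ℝ)) * ((m:ℝ) * Real.log m) :=
            mul_le_mul_of_nonneg_left hsum (by positivity)
        _ = Real.log m := by field_simp
    rw [abs_sub_le_iff]
    constructor <;> linarith
  calc |∑ j ∈ Finset.Icc 1 m,
        (Real.log j - (1 / (m : ℝ)) * ∑ i ∈ Finset.Icc 1 m, Real.log i) *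
          (g (a + c * j / n) - (1 / (m : ℝ)) * ∑ i ∈ Finset.Icc 1 m, g (a + c * i / n))|
      ≤ ∑ j ∈ Finset.Icc 1 m,
        |(Real.log j - (1 / (m : ℝ)) * ∑ i ∈ Finset.Icc 1 m, Real.log i) *
          (g (a + c * j / n) - (1 / (m : ℝ)) * ∑ i ∈ Finset.Icc 1 m, g (a + c * i / n))| :=
        Finset.abs_sum_le_sum_abs _ _
    _ ≤ ∑ j ∈ Finset.Icc 1 m, Real.log m * (L * (c * m / n)) := by
        apply Finset.sum_le_sum
        intro j hj
        rw [abs_mul]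
        exact mul_le_mul (hlb j hj) (hgb j hj) (abs_nonneg _) hlogm
    _ = (m:ℝ) * (Real.log m * (L * (c * m / n))) := by
        rw [Finset.sum_const, hcard, nsmul_eq_mul]
    _ = L * c * ((m : ℝ) ^ 2 / n) * Real.log m := by
        field_simp
end
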